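/- For indeterminates x_1,…,x_n, y_1,…,y_n, t, one has ( ∏_{i,j=1}^{n} (1−t x_i y_j) / (Δ(x)_n Δ(y)_n) ) · det[ (1−t) / ((1−x_i y_j)(1−t x_i y_j)) ]_{1≤i,j≤n} = Σ_{S ⊆ {1,…,n}} (−1)^{|S|} t^{|S|(|S|+1)/2} ∏_{i∈S, j∉S} (t x_i − x_j)/(x_i − x_j) · ∏_{i∈S} ∏_{j=1}^{n} (1 − x_i y_j)/(1 − t x_i y_j) · ∏_{i,j=1}^{n} (1 − t x_i y_j)/(1 − x_i y_j), as an identity of rational functions. (The right-hand side is the Macdonald difference-operator generating series D_n(−t;0,t) applied to the Hall–Littlewood Cauchy kernel ∏_{i,j}(1−t x_i y_j)/(1−x_i y_j).) -/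

import Mathlib

noncomputable section

open scoped BigOperators

open Finset

lemma cauchy_det {K : Type*} [Field K] :
    ∀ (n : ℕ) (x y : Fin n → K), (∀ i j, x i * y j ≠ 1) →
    (Matrix.of fun i j : Fin n => (1 - x i * y j)⁻¹).det
      = ((∏ i, ∏ j ∈ Finset.Ioi i, (x j - x i)) * (∏ i, ∏ j ∈ Finset.Ioi i, (y j - y i)))
        / ∏ i, ∏ j, (1 - x i * y j) := by
  intro n
  induction n with
  | zero =>
    intro x y h
    simp [Matrix.det_eq_one_of_card_eq_zero (Fintype.card_fin 0)]
  | succ n ih =>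
    intro x y h
    have hd : ∀ i j, (1 : K) - x i * y j ≠ 0 := fun i j => sub_ne_zero.2 (Ne.symm (h i j))
    have key : ∀ u v p q : K, 1 - u*v ≠ 0 → 1 - u*q ≠ 0 → 1 - p*v ≠ 0 → 1 - p*q ≠ 0 →
        ((1-u*v)⁻¹ - (1-p*v)⁻¹) - (1-p*q)*(1-p*v)⁻¹*((1-u*q)⁻¹ - (1-p*q)⁻¹)
          = (u-p)*(1-u*q)⁻¹*((v-q)*(1-p*v)⁻¹*(1-u*v)⁻¹) := by
      intro u v p q ha hb hc hd
      have hc' : 1 - v * p ≠ 0 := by rwa [mul_comm]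
      field_simp
      ring
    have key0 : ∀ c d : K, c ≠ 0 → d ≠ 0 → c⁻¹ - d * c⁻¹ * d⁻¹ = 0 := by
      intro c d hc hd
      field_simp
      ring
    -- Step 1: row operations
    set B1 : Matrix (Fin (n+1)) (Fin (n+1)) K := Matrix.of (fun i j =>
      if i = 0 then (1 - x 0 * y j)⁻¹ else (1 - x i * y j)⁻¹ - (1 - x 0 * y j)⁻¹) with hB1
    have step1 : (Matrix.of fun i j : Fin (n+1) => (1 - x i * y j)⁻¹).det = B1.det := by
      apply Matrix.det_eq_of_forall_row_eq_smul_add_const (fun i => if i = 0 then 0 else 1) 0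
        (by simp)
      intro i j
      by_cases hi : i = 0 <;> simp [hB1, hi]
    -- Step 2: column operations
    set cc : Fin (n+1) → K := fun j => (1 - x 0 * y 0) * (1 - x 0 * y j)⁻¹ with hcc
    set B2 : Matrix (Fin (n+1)) (Fin (n+1)) K := Matrix.of (fun i j =>
      if j = 0 then B1 i 0 else B1 i j - cc j * B1 i 0) with hB2
    have step2 : B1.det = B2.det := by
      rw [← Matrix.det_transpose B1, ← Matrix.det_transpose B2]
      apply Matrix.det_eq_of_forall_row_eq_smul_add_const (fun j => if j = 0 then 0 else cc j) 0
        (by simp)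
      intro j i
      by_cases hj : j = 0
      · simp [hB2, hj]
      · simp only [Matrix.transpose_apply, hB2, Matrix.of_apply, if_neg hj]
        simp only [show ((0:Fin (n+1)) = 0) = True from by simp, if_true]
        ring
    -- entries of B2
    have hB2_zero : ∀ j, j ≠ 0 → B2 0 j = 0 := by
      intro j hj
      simp only [hB2, hB1, Matrix.of_apply, if_neg hj, if_pos rfl, hcc]
      exact key0 _ _ (hd 0 j) (hd 0 0)
    have hB2_00 : B2 0 0 = (1 - x 0 * y 0)⁻¹ := by simp [hB2, hB1]
    have hB2_succ : ∀ (i j : Fin n), B2 i.succ j.succ =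
        ((x i.succ - x 0) * (1 - x i.succ * y 0)⁻¹) *
          (((y j.succ - y 0) * (1 - x 0 * y j.succ)⁻¹) * (1 - x i.succ * y j.succ)⁻¹) := by
      intro i j
      have h1 : (i.succ : Fin (n+1)) ≠ 0 := Fin.succ_ne_zero i
      have h2 : (j.succ : Fin (n+1)) ≠ 0 := Fin.succ_ne_zero j
      simp only [hB2, hB1, Matrix.of_apply, if_neg h1, if_neg h2, hcc]
      exact key _ _ _ _ (hd i.succ j.succ) (hd i.succ 0) (hd 0 j.succ) (hd 0 0)
    -- Step 3: expand along row 0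
    have step3 : B2.det = (1 - x 0 * y 0)⁻¹ * (B2.submatrix Fin.succ Fin.succ).det := by
      rw [Matrix.det_succ_row_zero]
      rw [Fintype.sum_eq_single (0 : Fin (n+1))]
      · rw [hB2_00]
        simp [Fin.succAbove_zero]
      · intro j hj
        rw [hB2_zero j hj]
        ring
    -- Step 4: factor rows and columns of the submatrix
    have step4 : (B2.submatrix Fin.succ Fin.succ).det =
        (∏ i : Fin n, (x i.succ - x 0) * (1 - x i.succ * y 0)⁻¹) *
          ((∏ j : Fin n, (y j.succ - y 0) * (1 - x 0 * y j.succ)⁻¹) *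
            (Matrix.of fun i j : Fin n => (1 - x i.succ * y j.succ)⁻¹).det) := by
      have e1 : B2.submatrix Fin.succ Fin.succ = Matrix.of (fun i j : Fin n =>
          ((x i.succ - x 0) * (1 - x i.succ * y 0)⁻¹) *
            (Matrix.of (fun i j : Fin n => ((y j.succ - y 0) * (1 - x 0 * y j.succ)⁻¹) *
              (1 - x i.succ * y j.succ)⁻¹) i j)) := by
        ext i j
        simpa using hB2_succ i j
      rw [e1, Matrix.det_mul_column]
      congr 1
      have e2 : (Matrix.of (fun i j : Fin n => ((y j.succ - y 0) * (1 - x 0 * y j.succ)⁻¹) *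
          (1 - x i.succ * y j.succ)⁻¹)) = Matrix.of (fun i j : Fin n =>
            (fun j => (y j.succ - y 0) * (1 - x 0 * y j.succ)⁻¹) j *
              (Matrix.of fun i j : Fin n => (1 - x i.succ * y j.succ)⁻¹) i j) := rfl
      rw [e2, Matrix.det_mul_row]
    -- Apply induction hypothesis and combine
    rw [step1, step2, step3, step4,
      ih (fun i => x i.succ) (fun j => y j.succ) (fun i j => h i.succ j.succ)]
    -- expand RHS products
    have ex : (∏ i : Fin (n+1), ∏ j ∈ Ioi i, (x j - x i))
        = (∏ j : Fin n, (x j.succ - x 0)) * ∏ i : Fin n, ∏ j ∈ Ioi i, (x j.succ - x i.succ) := by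
      rw [Fin.prod_univ_succ, Fin.prod_Ioi_zero]
      simp_rw [Fin.prod_Ioi_succ]
    have ey : (∏ i : Fin (n+1), ∏ j ∈ Ioi i, (y j - y i))
        = (∏ j : Fin n, (y j.succ - y 0)) * ∏ i : Fin n, ∏ j ∈ Ioi i, (y j.succ - y i.succ) := by
      rw [Fin.prod_univ_succ, Fin.prod_Ioi_zero]
      simp_rw [Fin.prod_Ioi_succ]
    have ep : (∏ i : Fin (n+1), ∏ j : Fin (n+1), (1 - x i * y j))
        = ((1 - x 0 * y 0) * ∏ j : Fin n, (1 - x 0 * y j.succ)) *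
          ((∏ i : Fin n, (1 - x i.succ * y 0)) *
            ∏ i : Fin n, ∏ j : Fin n, (1 - x i.succ * y j.succ)) := by
      simp_rw [Fin.prod_univ_succ, Finset.prod_mul_distrib]
    rw [ex, ey, ep]
    simp only [Finset.prod_mul_distrib, Finset.prod_inv_distrib]
    have hC : (∏ i : Fin n, (1 - x i.succ * y 0)) ≠ 0 :=
      Finset.prod_ne_zero_iff.2 fun i _ => hd i.succ 0
    have hD : (∏ j : Fin n, (1 - x 0 * y j.succ)) ≠ 0 :=
      Finset.prod_ne_zero_iff.2 fun j _ => hd 0 j.succ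
    have hP : (∏ i : Fin n, ∏ j : Fin n, (1 - x i.succ * y j.succ)) ≠ 0 :=
      Finset.prod_ne_zero_iff.2 fun i _ => Finset.prod_ne_zero_iff.2 fun j _ => hd i.succ j.succ
    have hdd : (1 : K) - x 0 * y 0 ≠ 0 := hd 0 0
    field_simp

open Finset

lemma sum_card_Ioi_inter {m : ℕ} (S : Finset (Fin m)) :
    ∑ i ∈ S, (Finset.Ioi i ∩ S).card = S.card.choose 2 := by
  induction S using Finset.induction_on with
  | empty => simp
  | @insert a S ha ih =>
    rw [Finset.sum_insert ha]
    have e1 : Finset.Ioi a ∩ insert a S = Finset.Ioi a ∩ S :=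
      Finset.inter_insert_of_notMem (by simp)
    have e2 : ∀ i ∈ S, (Finset.Ioi i ∩ insert a S).card
        = (Finset.Ioi i ∩ S).card + (if i < a then 1 else 0) := by
      intro i _
      by_cases hia : i < a
      · rw [Finset.inter_insert_of_mem (Finset.mem_Ioi.2 hia), if_pos hia,
          Finset.card_insert_of_notMem (fun hmem => ha (Finset.mem_inter.1 hmem).2)]
      · rw [Finset.inter_insert_of_notMem (fun hmem => hia (Finset.mem_Ioi.1 hmem)), if_neg hia,
          add_zero]
    rw [e1, Finset.sum_congr rfl e2, Finset.sum_add_distrib, ih]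
    have e3 : (∑ i ∈ S, if i < a then 1 else 0) = (S.filter (· < a)).card := by
      rw [← Finset.sum_filter]
      exact (Finset.card_eq_sum_ones _).symm
    have e4 : Finset.Ioi a ∩ S = S.filter (a < ·) := by
      ext j
      simp [Finset.mem_Ioi, and_comm]
    have e5 : S.filter (a < ·) = S.filter (fun i => ¬ i < a) := by
      apply Finset.filter_congr
      intro i hi
      have hne : i ≠ a := fun h => ha (h ▸ hi)
      simp only [not_lt, eq_iff_iff]
      constructor
      · exact le_of_lt
      · intro hle
        exact lt_of_le_of_ne hle (Ne.symm hne)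
    have e6 : (S.filter (· < a)).card + (S.filter (fun i => ¬ i < a)).card = S.card :=
      Finset.card_filter_add_card_filter_not _
    rw [e3, e4, e5, Finset.card_insert_of_notMem ha]
    have e7 : (S.card + 1).choose 2 = S.card + S.card.choose 2 := by
      rw [Nat.choose_succ_succ, Nat.choose_one_right]
    omega

lemma prod_Ioi_swap {M : Type*} [CommMonoid M] {m : ℕ} (f : Fin m → Fin m → M) :
    ∏ i, ∏ j ∈ Finset.Ioi i, f i j = ∏ i, ∏ j ∈ Finset.Iio i, f j i := by
  rw [Finset.prod_sigma', Finset.prod_sigma']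
  refine Finset.prod_nbij' (fun p => ⟨p.2, p.1⟩) (fun p => ⟨p.2, p.1⟩) ?_ ?_ ?_ ?_ ?_ <;> simp

lemma my_off_diag {M : Type*} [CommMonoid M] {m : ℕ} (f : Fin m → Fin m → M) :
    ∏ i, ∏ j ∈ Finset.Ioi i, f j i * f i j = ∏ i, ∏ j ∈ Finset.univ.erase i, f j i := by
  simp_rw [Finset.prod_mul_distrib]
  rw [prod_Ioi_swap f, ← Finset.prod_mul_distrib]
  apply Finset.prod_congr rfl
  intro i _
  have hdisj : Disjoint (Finset.Ioi i) (Finset.Iio i) := by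
    rw [Finset.disjoint_left]
    intro j hj hj'
    exact lt_asymm (Finset.mem_Ioi.1 hj) (Finset.mem_Iio.1 hj')
  have e : Finset.univ.erase i = (Finset.Ioi i).disjUnion (Finset.Iio i) hdisj := by
    ext j
    simp only [Finset.mem_erase, Finset.mem_univ, and_true, Finset.mem_disjUnion,
      Finset.mem_Ioi, Finset.mem_Iio]
    rw [← lt_or_lt_iff_ne]
    tauto
  rw [e, Finset.prod_disjUnion]

lemma delta_piecewise {K : Type*} [Field K] {m : ℕ} (x : Fin m → K)
    (hxinj : Function.Injective x) (t : K) (S : Finset (Fin m)) :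
    (∏ i, ∏ j ∈ Finset.Ioi i,
        ((if j ∈ S then t * x j else x j) - (if i ∈ S then t * x i else x i)))
      = t ^ (S.card.choose 2) * (∏ i ∈ S, ∏ j ∈ Sᶜ, (t * x i - x j) / (x i - x j)) *
        ∏ i, ∏ j ∈ Finset.Ioi i, (x j - x i) := by
  set h : Fin m → Fin m → K :=
    fun i j => if i ∈ S ∧ j ∉ S then (t * x i - x j) / (x i - x j) else 1 with hh_def
  have stepa : (∏ i, ∏ j ∈ Finset.Ioi i,
      ((if j ∈ S then t * x j else x j) - (if i ∈ S then t * x i else x i)))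
      = ∏ i, ∏ j ∈ Finset.Ioi i,
        ((if i ∈ S ∧ j ∈ S then t else 1) * ((h i j * h j i) * (x j - x i))) := by
    apply Finset.prod_congr rfl
    intro i _
    apply Finset.prod_congr rfl
    intro j hj
    have hij : i ≠ j := ne_of_lt (Finset.mem_Ioi.1 hj)
    have hx : x i - x j ≠ 0 := sub_ne_zero.2 (fun e => hij (hxinj e))
    have hx' : x j - x i ≠ 0 := sub_ne_zero.2 (fun e => hij (hxinj e.symm))
    by_cases hi : i ∈ S <;> by_cases hjS : j ∈ S <;>
      (try simp only [hh_def, hi, hjS, if_true, if_false, and_true, and_false, true_and,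
        false_and, not_true, not_false_iff, ite_true, ite_false, one_mul, mul_one]) <;>
      (try field_simp) <;> ring
  rw [stepa]
  simp only [Finset.prod_mul_distrib]
  -- the mixed part
  have hoff := my_off_diag (fun i j => h j i)
  simp only [Finset.prod_mul_distrib] at hoff
  -- compute the mixed part
  have hH : (∏ i, ∏ j ∈ Finset.univ.erase i, h i j)
      = ∏ i ∈ S, ∏ j ∈ Sᶜ, (t * x i - x j) / (x i - x j) := by
    have e : ∀ i, ∏ j ∈ Finset.univ.erase i, h i j
        = if i ∈ S then ∏ j ∈ Sᶜ, (t * x i - x j) / (x i - x j) else 1 := by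
      intro i
      by_cases hi : i ∈ S
      · rw [if_pos hi]
        have e1 : ∀ j ∈ Finset.univ.erase i, h i j
            = if j ∈ Sᶜ then (t * x i - x j) / (x i - x j) else 1 := by
          intro j _
          simp [hh_def, hi]
        rw [Finset.prod_congr rfl e1, Finset.prod_ite_mem]
        congr 1
        rw [Finset.inter_eq_right]
        intro j hj
        rw [Finset.mem_erase]
        exact ⟨fun hji => (Finset.mem_compl.1 hj) (hji ▸ hi), Finset.mem_univ j⟩
      · rw [if_neg hi]
        apply Finset.prod_eq_one
        intro j _
        simp [hh_def, hi]
    rw [Finset.prod_congr rfl (fun i _ => e i), Finset.prod_ite_mem]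
    rw [Finset.univ_inter]
  rw [hoff, hH]
  -- compute the t-power part
  have hT : (∏ i, ∏ j ∈ Finset.Ioi i, (if i ∈ S ∧ j ∈ S then t else 1))
      = t ^ S.card.choose 2 := by
    have e : ∀ i : Fin m, (∏ j ∈ Finset.Ioi i, (if i ∈ S ∧ j ∈ S then t else 1))
        = if i ∈ S then t ^ (Finset.Ioi i ∩ S).card else 1 := by
      intro i
      by_cases hi : i ∈ S
      · rw [if_pos hi]
        have e1 : ∀ j ∈ Finset.Ioi i, (if i ∈ S ∧ j ∈ S then t else 1)
            = if j ∈ S then t else 1 := by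
          intro j _
          simp [hi]
        rw [Finset.prod_congr rfl e1, Finset.prod_ite_mem, Finset.prod_const]
      · rw [if_neg hi]
        apply Finset.prod_eq_one
        intro j _
        simp [hi]
    rw [Finset.prod_congr rfl (fun i _ => e i), Finset.prod_ite_mem, Finset.univ_inter,
      Finset.prod_pow_eq_pow_sum, sum_card_Ioi_inter]
  rw [hT]
  ring

section Lemmas
end Lemmas

set_option maxHeartbeats 1000000 in
/-- The normalized Izergin–Korepin determinant equals the Macdonald difference-operator
generating series `D_n(-t;0,t)` applied to the Hall–Littlewood Cauchy kernel:
`(∏_{i,j}(1-t xᵢyⱼ) / (Δ(x)Δ(y))) · det[(1-t)/((1-xᵢyⱼ)(1-t xᵢyⱼ))]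
  = Σ_{S⊆[n]} (-1)^{|S|} t^{|S|(|S|+1)/2} ∏_{i∈S,j∉S} (t xᵢ-xⱼ)/(xᵢ-xⱼ)
      · ∏_{i∈S} ∏_j (1-xᵢyⱼ)/(1-t xᵢyⱼ) · ∏_{i,j} (1-t xᵢyⱼ)/(1-xᵢyⱼ)`. -/
theorem izergin_equals_difference_operator_series {K : Type*} [Field K] (n : ℕ)
    (x y : Fin n → K) (t : K)
    (hxinj : Function.Injective x) (hyinj : Function.Injective y)
    (h1 : ∀ i j, x i * y j ≠ 1) (h2 : ∀ i j, t * (x i * y j) ≠ 1) :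
    (∏ i : Fin n, ∏ j : Fin n, (1 - t * (x i * y j))) /
        ((∏ i : Fin n, ∏ j ∈ Finset.Ioi i, (x i - x j)) *
          (∏ i : Fin n, ∏ j ∈ Finset.Ioi i, (y i - y j))) *
        (Matrix.of fun i j : Fin n =>
          (1 - t) / ((1 - x i * y j) * (1 - t * (x i * y j)))).det =
      ∑ S : Finset (Fin n),
        (-1 : K) ^ S.card * t ^ (S.card * (S.card + 1) / 2) *
          (∏ i ∈ S, ∏ j ∈ Sᶜ, (t * x i - x j) / (x i - x j)) *
          (∏ i ∈ S, ∏ j : Fin n, (1 - x i * y j) / (1 - t * (x i * y j))) *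
          ∏ i : Fin n, ∏ j : Fin n, (1 - t * (x i * y j)) / (1 - x i * y j) := by
  have hd1 : ∀ i j, (1 : K) - x i * y j ≠ 0 := fun i j => sub_ne_zero.2 (Ne.symm (h1 i j))
  have hd2 : ∀ i j, (1 : K) - t * (x i * y j) ≠ 0 := fun i j => sub_ne_zero.2 (Ne.symm (h2 i j))
  set a : Fin n → Fin n → K := fun i j => (1 - x i * y j)⁻¹ with ha
  set b : Fin n → Fin n → K := fun i j => -(t * (1 - t * (x i * y j))⁻¹) with hb
  -- rewrite the matrix entries
  have hM : (Matrix.of fun i j : Fin n =>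
      (1 - t) / ((1 - x i * y j) * (1 - t * (x i * y j)))) = Matrix.of (b + a) := by
    ext i j
    simp only [Matrix.of_apply, Pi.add_apply, ha, hb]
    have e1 := hd1 i j
    have e2 := hd2 i j
    have e3 : 1 - t * x i * y j ≠ 0 := by rwa [mul_assoc]
    field_simp
    ring
  -- multilinear expansion of the determinant over subsets
  have hdet : (Matrix.of (b + a)).det
      = ∑ S : Finset (Fin n), (Matrix.of (S.piecewise b a)).det := by
    exact (Matrix.detRowAlternating (n := Fin n) (R := K)).toMultilinearMap.map_add_univ b a
  rw [hM, hdet, Finset.mul_sum]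
  apply Finset.sum_congr rfl
  intro S _
  -- the piecewise matrix is a scaled Cauchy matrix
  set z : Fin n → K := fun i => if i ∈ S then t * x i else x i with hz
  have hzy : ∀ i j, z i * y j ≠ 1 := by
    intro i j
    by_cases hi : i ∈ S
    · simpa [hz, hi, mul_assoc] using h2 i j
    · simpa [hz, hi] using h1 i j
  have hscale : Matrix.of (S.piecewise b a) = Matrix.of (fun i j =>
      (if i ∈ S then -t else 1) * ((Matrix.of fun i j : Fin n => (1 - z i * y j)⁻¹) i j)) := by
    ext i j
    by_cases hi : i ∈ S
    · simp only [Matrix.of_apply, S.piecewise_eq_of_mem _ _ hi, hb, hz, if_pos hi]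
      rw [mul_assoc]
      ring
    · simp only [Matrix.of_apply, S.piecewise_eq_of_notMem _ _ hi, ha, hz, if_neg hi]
      ring
  rw [hscale, Matrix.det_mul_column, cauchy_det n z y hzy]
  -- scalar bookkeeping
  have hsign : (∏ i, if i ∈ S then (-t : K) else 1) = (-1) ^ S.card * t ^ S.card := by
    rw [Finset.prod_ite_mem, Finset.univ_inter, Finset.prod_const]
    rw [neg_pow]
  -- split the z-Vandermonde
  have hdz := delta_piecewise x hxinj t S
  -- split the product over rows
  have hPz : (∏ i, ∏ j, (1 - z i * y j))
      = (∏ i ∈ S, ∏ j, (1 - t * (x i * y j))) * (∏ i ∈ Sᶜ, ∏ j, (1 - x i * y j)) := by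
    rw [← Finset.prod_mul_prod_compl S (fun i => ∏ j, (1 - z i * y j))]
    congr 1
    · apply Finset.prod_congr rfl
      intro i hi
      apply Finset.prod_congr rfl
      intro j _
      rw [hz]
      simp only [if_pos hi, mul_assoc]
    · apply Finset.prod_congr rfl
      intro i hi
      apply Finset.prod_congr rfl
      intro j _
      rw [hz]
      simp only [if_neg (Finset.mem_compl.1 hi)]
  have hdzz : (∏ i, ∏ j ∈ Finset.Ioi i, (z j - z i))
      = t ^ (S.card.choose 2) * (∏ i ∈ S, ∏ j ∈ Sᶜ, (t * x i - x j) / (x i - x j)) *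
        ∏ i, ∏ j ∈ Finset.Ioi i, (x j - x i) := by
    simp only [hz]
    exact hdz
  rw [hsign, hdzz, hPz]
  -- sign flip for the Vandermonde factors
  have hflip : (∏ i, ∏ j ∈ Finset.Ioi i, (x i - x j)) * (∏ i, ∏ j ∈ Finset.Ioi i, (y i - y j))
      = (∏ i, ∏ j ∈ Finset.Ioi i, (x j - x i)) * (∏ i, ∏ j ∈ Finset.Ioi i, (y j - y i)) := by
    have e : ∀ v : Fin n → K, ∏ i : Fin n, ∏ j ∈ Finset.Ioi i, (v i - v j)
        = (∏ i : Fin n, ∏ j ∈ Finset.Ioi i, (-1 : K)) * ∏ i : Fin n, ∏ j ∈ Finset.Ioi i, (v j - v i) := by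
      intro v
      rw [← Finset.prod_mul_distrib]
      apply Finset.prod_congr rfl
      intro i _
      rw [← Finset.prod_mul_distrib]
      apply Finset.prod_congr rfl
      intro j _
      ring
    have ee : (∏ i : Fin n, ∏ j ∈ Finset.Ioi i, (-1 : K)) *
        (∏ i : Fin n, ∏ j ∈ Finset.Ioi i, (-1 : K)) = 1 := by
      rw [← Finset.prod_mul_distrib]
      have : ∀ i : Fin n, (∏ j ∈ Finset.Ioi i, (-1 : K)) * (∏ j ∈ Finset.Ioi i, (-1 : K)) = 1 := by
        intro i
        rw [← Finset.prod_mul_distrib]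
        simp
      rw [Finset.prod_congr rfl (fun i _ => this i)]
      simp
    rw [e x, e y]
    calc (∏ i : Fin n, ∏ j ∈ Finset.Ioi i, (-1:K)) * (∏ i, ∏ j ∈ Finset.Ioi i, (x j - x i)) *
        ((∏ i : Fin n, ∏ j ∈ Finset.Ioi i, (-1:K)) * ∏ i, ∏ j ∈ Finset.Ioi i, (y j - y i))
        = ((∏ i : Fin n, ∏ j ∈ Finset.Ioi i, (-1:K)) * (∏ i : Fin n, ∏ j ∈ Finset.Ioi i, (-1:K)))
          * ((∏ i, ∏ j ∈ Finset.Ioi i, (x j - x i)) * ∏ i, ∏ j ∈ Finset.Ioi i, (y j - y i)) := by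
          ring
      _ = (∏ i, ∏ j ∈ Finset.Ioi i, (x j - x i)) * ∏ i, ∏ j ∈ Finset.Ioi i, (y j - y i) := by
          rw [ee, one_mul]
  rw [hflip]
  -- exponent arithmetic
  have hexp : S.card * (S.card + 1) / 2 = S.card + S.card.choose 2 := by
    have e1 : (S.card + 1).choose 2 = S.card.choose 1 + S.card.choose 2 :=
      Nat.choose_succ_succ _ _
    have e2 : (S.card + 1).choose 2 = (S.card + 1) * S.card / 2 := by
      rw [Nat.choose_two_right]
      simp
    rw [mul_comm, ← e2, e1, Nat.choose_one_right]
  rw [hexp, pow_add]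
  -- final field computation
  have hQsplit : (∏ i : Fin n, ∏ j : Fin n, (1 - x i * y j))
      = (∏ i ∈ S, ∏ j, (1 - x i * y j)) * (∏ i ∈ Sᶜ, ∏ j, (1 - x i * y j)) :=
    (Finset.prod_mul_prod_compl S _).symm
  have hPsplit : (∏ i : Fin n, ∏ j : Fin n, (1 - t * (x i * y j)))
      = (∏ i ∈ S, ∏ j, (1 - t * (x i * y j))) * (∏ i ∈ Sᶜ, ∏ j, (1 - t * (x i * y j))) :=
    (Finset.prod_mul_prod_compl S _).symm
  have hRdiv : (∏ i ∈ S, ∏ j : Fin n, (1 - x i * y j) / (1 - t * (x i * y j)))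
      = (∏ i ∈ S, ∏ j, (1 - x i * y j)) / (∏ i ∈ S, ∏ j, (1 - t * (x i * y j))) := by
    rw [← Finset.prod_div_distrib]
    apply Finset.prod_congr rfl
    intro i _
    rw [← Finset.prod_div_distrib]
  have hPQdiv : (∏ i : Fin n, ∏ j : Fin n, (1 - t * (x i * y j)) / (1 - x i * y j))
      = (∏ i : Fin n, ∏ j : Fin n, (1 - t * (x i * y j)))
        / (∏ i : Fin n, ∏ j : Fin n, (1 - x i * y j)) := by
    rw [← Finset.prod_div_distrib]
    apply Finset.prod_congr rfl
    intro i _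
    rw [← Finset.prod_div_distrib]
  rw [hRdiv, hPQdiv, hPsplit, hQsplit]
  have hDx : (∏ i, ∏ j ∈ Finset.Ioi i, (x j - x i)) ≠ 0 :=
    Finset.prod_ne_zero_iff.2 fun i _ => Finset.prod_ne_zero_iff.2 fun j hj =>
      sub_ne_zero.2 fun e => (ne_of_gt (Finset.mem_Ioi.1 hj)) (hxinj e)
  have hDy : (∏ i, ∏ j ∈ Finset.Ioi i, (y j - y i)) ≠ 0 :=
    Finset.prod_ne_zero_iff.2 fun i _ => Finset.prod_ne_zero_iff.2 fun j hj =>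
      sub_ne_zero.2 fun e => (ne_of_gt (Finset.mem_Ioi.1 hj)) (hyinj e)
  have hA : (∏ i ∈ S, ∏ j, (1 - t * (x i * y j))) ≠ 0 :=
    Finset.prod_ne_zero_iff.2 fun i _ => Finset.prod_ne_zero_iff.2 fun j _ => hd2 i j
  have hB : (∏ i ∈ Sᶜ, ∏ j, (1 - x i * y j)) ≠ 0 :=
    Finset.prod_ne_zero_iff.2 fun i _ => Finset.prod_ne_zero_iff.2 fun j _ => hd1 i j
  have hA' : (∏ i ∈ S, ∏ j, (1 - x i * y j)) ≠ 0 :=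
    Finset.prod_ne_zero_iff.2 fun i _ => Finset.prod_ne_zero_iff.2 fun j _ => hd1 i j
  have hB' : (∏ i ∈ Sᶜ, ∏ j, (1 - t * (x i * y j))) ≠ 0 :=
    Finset.prod_ne_zero_iff.2 fun i _ => Finset.prod_ne_zero_iff.2 fun j _ => hd2 i j
  have key : ∀ (A B A' B' Dx Dy R u v w : K), Dx ≠ 0 → Dy ≠ 0 → A ≠ 0 → A' ≠ 0 → B ≠ 0 →
      A * B' / (Dx * Dy) * (v * w * (u * R * Dx * Dy / (A * B)))
        = v * (w * u) * R * (A' / A) * (A * B' / (A' * B)) := by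
    intro A B A' B' Dx Dy R u v w kDx kDy kA kA' kB
    field_simp
  convert key (∏ i ∈ S, ∏ j, (1 - t * (x i * y j))) (∏ i ∈ Sᶜ, ∏ j, (1 - x i * y j))
    (∏ i ∈ S, ∏ j, (1 - x i * y j)) (∏ i ∈ Sᶜ, ∏ j, (1 - t * (x i * y j)))
    (∏ i, ∏ j ∈ Finset.Ioi i, (x j - x i)) (∏ i, ∏ j ∈ Finset.Ioi i, (y j - y i))
    (∏ i ∈ S, ∏ j ∈ Sᶜ, (t * x i - x j) / (x i - x j)) (t ^ (S.card.choose 2))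
    ((-1 : K) ^ S.card) (t ^ S.card) hDx hDy hA hA' hB using 1
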